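/- Let G be a group and α : G → G a group homomorphism, extended linearly to the group algebra KG. Define μ(e_g ⊗ e_{g'}) = e_{α(g·g')} and Δ(e_g) = e_{α(g)} ⊗ e_{α(g)}, with unit e_1 and counit ε(e_g) = 1. Then (KG, μ, η, Δ, ε, α) is a Hom-bialgebra. -/

import Mathlib

open TensorProduct

/-- For a group `G` and a group homomorphism `φ : G → G`, the
group algebra `KG` with `μ(e_g ⊗ e_g') = e_{φ(g·g')}`, `Δ(e_g) = e_{φ g} ⊗ e_{φ g}`,
unit `e_1` and counit `ε(e_g) = 1`, is a Hom-bialgebra (where `α` is the linear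
extension of `φ`). -/
theorem stmt12 {K G : Type*} [Field K] [Group G] (φ : G →* G)
    (α : MonoidAlgebra K G →ₗ[K] MonoidAlgebra K G)
    (hα : ∀ g : G, α (MonoidAlgebra.single g 1) = MonoidAlgebra.single (φ g) 1)
    (Δ : MonoidAlgebra K G →ₗ[K] MonoidAlgebra K G ⊗[K] MonoidAlgebra K G)
    (hΔ : ∀ g : G, Δ (MonoidAlgebra.single g 1)
      = MonoidAlgebra.single (φ g) (1:K) ⊗ₜ[K] MonoidAlgebra.single (φ g) (1:K))
    (ε : MonoidAlgebra K G →ₗ[K] K)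
    (hε : ∀ g : G, ε (MonoidAlgebra.single g 1) = 1) :
    -- Hom-associativity of μ(x,y) = α(x·y)
    (∀ x y z : MonoidAlgebra K G, α (α (x * y) * α z) = α (α x * α (y * z))) ∧
    -- unit e_1 = 1
    (∀ x : MonoidAlgebra K G, α (x * 1) = α x ∧ α (1 * x) = α x) ∧
    -- Hom-coassociativity
    (∀ x : MonoidAlgebra K G,
      TensorProduct.map α Δ (Δ x)
        = TensorProduct.assoc K _ _ _ (TensorProduct.map Δ α (Δ x))) ∧
    -- counit
    (∀ x : MonoidAlgebra K G,
      TensorProduct.lid K _ (TensorProduct.map ε LinearMap.id (Δ x)) = α x ∧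
      TensorProduct.rid K _ (TensorProduct.map LinearMap.id ε (Δ x)) = α x) ∧
    -- compatibility of Δ and ε with μ and the unit
    (Δ 1 = 1 ⊗ₜ[K] 1) ∧
    (∀ x y : MonoidAlgebra K G,
      Δ (α (x * y)) = TensorProduct.map α α (Δ x * Δ y)) ∧
    (ε 1 = 1) ∧
    (∀ x y : MonoidAlgebra K G, ε (α (x * y)) = ε x * ε y) ∧
    (∀ x : MonoidAlgebra K G, ε (α x) = ε x) := by
  classical
  -- Identify α with an algebra homomorphism
  set A : MonoidAlgebra K G →ₐ[K] MonoidAlgebra K G :=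
    MonoidAlgebra.lift K _ G ((MonoidAlgebra.of K G).comp φ) with hAdef
  have hAα : ∀ x, α x = A x := by
    have : α = A.toLinearMap := by
      apply MonoidAlgebra.lhom_ext'
      intro g
      apply LinearMap.ext_ring
      simp only [LinearMap.comp_apply, MonoidAlgebra.lsingle_apply]
      rw [hα]
      simp [hAdef, MonoidAlgebra.lift_single, MonoidAlgebra.of_apply]
    intro x; rw [this]; rfl
  -- Identify Δ with an algebra homomorphism
  have hdiag_mul : ∀ g h : G,
      (MonoidAlgebra.single (φ g) (1:K) ⊗ₜ[K] MonoidAlgebra.single (φ g) (1:K)) *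
      (MonoidAlgebra.single (φ h) (1:K) ⊗ₜ[K] MonoidAlgebra.single (φ h) (1:K))
        = MonoidAlgebra.single (φ (g*h)) (1:K) ⊗ₜ[K] MonoidAlgebra.single (φ (g*h)) (1:K) := by
    intro g h
    rw [Algebra.TensorProduct.tmul_mul_tmul, MonoidAlgebra.single_mul_single,
      one_mul, map_mul]
  set Dm : G →* (MonoidAlgebra K G ⊗[K] MonoidAlgebra K G) :=
    { toFun := fun g => MonoidAlgebra.single (φ g) (1:K) ⊗ₜ[K] MonoidAlgebra.single (φ g) (1:K)
      map_one' := by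
        simp only [map_one]
        rw [← MonoidAlgebra.one_def, Algebra.TensorProduct.one_def]
      map_mul' := fun g h => (hdiag_mul g h).symm } with hDmdef
  set D : MonoidAlgebra K G →ₐ[K] (MonoidAlgebra K G ⊗[K] MonoidAlgebra K G) :=
    MonoidAlgebra.lift K _ G Dm with hDdef
  have hDΔ : ∀ x, Δ x = D x := by
    have : Δ = D.toLinearMap := by
      apply MonoidAlgebra.lhom_ext'
      intro g
      apply LinearMap.ext_ring
      simp only [LinearMap.comp_apply, MonoidAlgebra.lsingle_apply]
      rw [hΔ]
      simp [hDdef, hDmdef, MonoidAlgebra.lift_single]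
    intro x; rw [this]; rfl
  -- Identify ε with an algebra homomorphism
  set E : MonoidAlgebra K G →ₐ[K] K := MonoidAlgebra.lift K K G 1 with hEdef
  have hEε : ∀ x, ε x = E x := by
    have : ε = E.toLinearMap := by
      apply MonoidAlgebra.lhom_ext'
      intro g
      apply LinearMap.ext_ring
      simp only [LinearMap.comp_apply, MonoidAlgebra.lsingle_apply]
      rw [hε]
      simp [hEdef, MonoidAlgebra.lift_single]
    intro x; rw [this]; rfl
  have hαmul : ∀ x y, α (x * y) = α x * α y := by
    intro x y; rw [hAα, hAα, hAα, map_mul]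
  have hΔmul : ∀ x y, Δ (x * y) = Δ x * Δ y := by
    intro x y; rw [hDΔ, hDΔ, hDΔ, map_mul]
  have hεmul : ∀ x y, ε (x * y) = ε x * ε y := by
    intro x y; rw [hEε, hEε, hEε, map_mul]
  -- Δ ∘ α = (α ⊗ α) ∘ Δ, and ε ∘ α = ε, by checking on basis elements
  have hΔα : ∀ x, Δ (α x) = TensorProduct.map α α (Δ x) := by
    have : Δ.comp α = (TensorProduct.map α α).comp Δ := by
      apply MonoidAlgebra.lhom_ext'
      intro g
      apply LinearMap.ext_ring
      simp only [LinearMap.comp_apply, MonoidAlgebra.lsingle_apply]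
      simp only [hα, hΔ, TensorProduct.map_tmul]
    intro x
    exact LinearMap.congr_fun this x
  have hεα : ∀ x, ε (α x) = ε x := by
    have : ε.comp α = ε := by
      apply MonoidAlgebra.lhom_ext'
      intro g
      apply LinearMap.ext_ring
      simp only [LinearMap.comp_apply, MonoidAlgebra.lsingle_apply]
      rw [hα, hε, hε]
    intro x
    exact LinearMap.congr_fun this x
  refine ⟨?_, ?_, ?_, ?_, ?_, ?_, ?_, ?_, hεα⟩
  · intro x y z
    rw [hαmul x y, hαmul y z, hαmul, hαmul, hαmul, hαmul, mul_assoc]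
  · intro x; exact ⟨by rw [mul_one], by rw [one_mul]⟩
  · -- Hom-coassociativity
    intro x
    have h : (TensorProduct.map α Δ).comp Δ
        = ((TensorProduct.assoc K (MonoidAlgebra K G) (MonoidAlgebra K G)
            (MonoidAlgebra K G)).toLinearMap.comp ((TensorProduct.map Δ α).comp Δ)) := by
      apply MonoidAlgebra.lhom_ext'
      intro g
      apply LinearMap.ext_ring
      simp only [LinearMap.comp_apply, MonoidAlgebra.lsingle_apply, LinearEquiv.coe_coe]
      simp only [hΔ, hα, TensorProduct.map_tmul, TensorProduct.assoc_tmul]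
    exact LinearMap.congr_fun h x
  · -- counit
    intro x
    constructor
    · have h : (TensorProduct.lid K (MonoidAlgebra K G)).toLinearMap.comp
          ((TensorProduct.map ε LinearMap.id).comp Δ) = α := by
        apply MonoidAlgebra.lhom_ext'
        intro g
        apply LinearMap.ext_ring
        simp only [LinearMap.comp_apply, MonoidAlgebra.lsingle_apply, LinearEquiv.coe_coe]
        rw [hΔ, hα, TensorProduct.map_tmul, hε, TensorProduct.lid_tmul]
        simp
      exact LinearMap.congr_fun h x
    · have h : (TensorProduct.rid K (MonoidAlgebra K G)).toLinearMap.comp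
          ((TensorProduct.map LinearMap.id ε).comp Δ) = α := by
        apply MonoidAlgebra.lhom_ext'
        intro g
        apply LinearMap.ext_ring
        simp only [LinearMap.comp_apply, MonoidAlgebra.lsingle_apply, LinearEquiv.coe_coe]
        rw [hΔ, hα, TensorProduct.map_tmul, hε, TensorProduct.rid_tmul]
        simp
      exact LinearMap.congr_fun h x
  · rw [MonoidAlgebra.one_def, hΔ, map_one, ← MonoidAlgebra.one_def]
  · intro x y
    rw [hΔα, hΔmul]
  · rw [MonoidAlgebra.one_def, hε]
  · intro x y
    rw [hεα, hεmul]
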